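/- Block pivot identity: let A be an n×n real matrix, let j be an index with A_{jj} ≠ 0, and let T ⊆ {1,…,n}\{j}. Then the Schur-type update A'_{T,T} := A_{T,T} − A_{jj}⁻¹ A_{T,j} A_{j,T} equals the (T,T) block of the matrix obtained from A by a simplex pivot on entry (j,j); moreover, if A = B⁻¹N for invertible B, then A'_{T,T} = ((B')⁻¹N')_{T,T}, where (B', N') are obtained from (B, N) by swapping the j-th columns of B and N. -/

import Mathlib

open Matrix

private lemma two_point_sum {n : ℕ} {i j : Fin n} (hij : i ≠ j) (a b : ℝ) :
    ∑ l, (if l = j then a else if l = i then b else 0) = a + b := by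
  rw [← Finset.sum_subset (Finset.subset_univ ({j, i} : Finset (Fin n)))
      (fun x _ hx => ?_)]
  · rw [Finset.sum_pair (Ne.symm hij)]
    simp [hij, Ne.symm hij]
  · simp only [Finset.mem_insert, Finset.mem_singleton, not_or] at hx
    simp [hx.1, hx.2]

/-- Block pivot identity: if `A = B⁻¹N` with `B` invertible and `A j j ≠ 0`,
and `B', N'` are obtained by swapping the `j`-th columns of `B` and `N`, then
`B'` is invertible and, on any index set `T` avoiding `j`, the `(T,T)` block of
the pivoted tableau `(B')⁻¹N'` is given by the Schur-type update
`A i k − A i j · A j k / A j j`. -/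
theorem stmt8 {n : ℕ} (B N : Matrix (Fin n) (Fin n) ℝ)
    (hB : IsUnit B) (A : Matrix (Fin n) (Fin n) ℝ) (hA : A = B⁻¹ * N)
    (j : Fin n) (hjj : A j j ≠ 0)
    (T : Set (Fin n)) (hT : j ∉ T)
    (B' N' : Matrix (Fin n) (Fin n) ℝ)
    (hB' : ∀ i k, B' i k = if k = j then N i k else B i k)
    (hN' : ∀ i k, N' i k = if k = j then B i k else N i k) :
    IsUnit B' ∧
      ∀ i ∈ T, ∀ k ∈ T,
        ((B')⁻¹ * N') i k = A i k - A i j * A j k / A j j := by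
  have hBdet : IsUnit B.det := (Matrix.isUnit_iff_isUnit_det B).mp hB
  have hBA : B * A = N := by
    rw [hA, Matrix.mul_nonsing_inv_cancel_left _ _ hBdet]
  -- the elementary pivot matrix and its inverse
  set E : Matrix (Fin n) (Fin n) ℝ :=
    fun i k => if k = j then A i j else if i = k then 1 else 0 with hE
  set F : Matrix (Fin n) (Fin n) ℝ :=
    fun i k => if k = j then (if i = j then (A j j)⁻¹ else -(A i j) / A j j)
      else if i = k then 1 else 0 with hF
  have hEF : E * F = 1 := by
    ext i k
    rw [Matrix.mul_apply]
    by_cases hk : k = j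
    · subst hk
      by_cases hi : i = k
      · subst hi
        rw [Finset.sum_eq_single i]
        · simp [hE, hF, mul_inv_cancel₀ hjj]
        · intro l _ hl
          simp [hE, hF, hl, Ne.symm hl]
        · simp
      · have : ∀ l, E i l * F l k =
            if l = k then A i k * (A k k)⁻¹ else if l = i then -(A i k) / A k k else 0 := by
          intro l
          by_cases hl : l = k
          · subst hl; simp [hE, hF]
          · by_cases hli : l = i
            · subst hli; simp [hE, hF, hl, hi]
            · simp [hE, hF, hl, hli, Ne.symm hli]
        rw [Finset.sum_congr rfl (fun l _ => this l), two_point_sum hi]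
        field_simp [hi]
        simp [Matrix.one_apply_ne hi]
    · have : ∀ l, E i l * F l k = if l = k then E i k else 0 := by
        intro l
        by_cases hl : l = k
        · subst hl; simp [hF, hk]
        · simp [hF, hk, hl]
      rw [Finset.sum_congr rfl (fun l _ => this l), Finset.sum_ite_eq' Finset.univ k]
      simp [hE, hk, Matrix.one_apply]
  have hFE : F * E = 1 := mul_eq_one_comm.mp hEF
  have hEunit : IsUnit E := ⟨⟨E, F, hEF, hFE⟩, rfl⟩
  have hBE : B' = B * E := by
    ext i k
    rw [hB' i k, Matrix.mul_apply]
    by_cases hk : k = j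
    · subst hk
      simp only [hE, if_pos rfl, if_true]
      rw [← hBA, Matrix.mul_apply]
    · simp [hE, hk, mul_ite, Finset.sum_ite_eq' Finset.univ k]
  have hBunit' : IsUnit B' := by rw [hBE]; exact hB.mul hEunit
  refine ⟨hBunit', fun i hi k hk => ?_⟩
  have hij : i ≠ j := fun h => hT (h ▸ hi)
  have hkj : k ≠ j := fun h => hT (h ▸ hk)
  have hEinv : E⁻¹ = F := Matrix.inv_eq_right_inv hEF
  have hBinv' : (B')⁻¹ = F * B⁻¹ := by
    rw [hBE, Matrix.mul_inv_rev, hEinv]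
  -- B⁻¹ * N'
  have hM : ∀ l, (B⁻¹ * N') l k = A l k := by
    intro l
    rw [Matrix.mul_apply]
    have : ∀ m, B⁻¹ l m * N' m k = B⁻¹ l m * N m k := by
      intro m; rw [hN' m k, if_neg hkj]
    rw [Finset.sum_congr rfl (fun m _ => this m), hA, Matrix.mul_apply]
  rw [hBinv', Matrix.mul_assoc, Matrix.mul_apply]
  have : ∀ l, F i l * (B⁻¹ * N') l k =
      if l = j then -(A i j) / A j j * A j k else if l = i then A i k else 0 := by
    intro l
    rw [hM l]
    by_cases hl : l = j
    · subst hl; simp [hF, hij]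
    · by_cases hli : l = i
      · subst hli; simp [hF, hl]
      · simp [hF, hl, hli, Ne.symm hli]
  rw [Finset.sum_congr rfl (fun l _ => this l), two_point_sum hij]
  ring
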